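/- arXiv:1812.00289 — 5 statements merged into one kernel-verified Lean document; each statement's English description precedes it below -/
import Mathlib

section
/- With Q1, Q2 symmetric positive definite and φ(t) = [(1−t)Q1 + tQ2]⁻¹[(1−t)Q1 x1 + t Q2 x2], the map φ : [0,1] → ℝ^n is differentiable and satisfies t[(1−t)Q1 + tQ2] φ'(t) = Q1(φ(t) − x1) for all t ∈ [0,1], with φ(0) = x1 and φ(1) = x2. -/
open Matrix

private lemma aux_det_diff {m : ℕ} (M : ℝ → Matrix (Fin m) (Fin m) ℝ) (t : ℝ)
    (h : ∀ i j, DifferentiableAt ℝ (fun s => M s i j) t) :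
    DifferentiableAt ℝ (fun s => (M s).det) t := by
  simp only [Matrix.det_apply']
  refine DifferentiableAt.fun_sum fun σ _ => DifferentiableAt.const_mul ?_ _
  exact (HasDerivAt.fun_finsetProd (fun i _ => (h (σ i) i).hasDerivAt)).differentiableAt

private lemma aux_posdef {m : ℕ} (Q1 Q2 : Matrix (Fin m) (Fin m) ℝ)
    (hQ1 : Q1.PosDef) (hQ2 : Q2.PosDef) {t : ℝ} (h0 : 0 ≤ t) (h1 : t ≤ 1) :
    ((1 - t) • Q1 + t • Q2).PosDef := by
  constructor
  · show _ = _
    simp only [conjTranspose_add, conjTranspose_smul, star_trivial, hQ1.1.eq, hQ2.1.eq]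
  · rcases eq_or_lt_of_le h0 with h | h
    · subst h
      simp only [sub_zero, one_smul, zero_smul, add_zero]
      exact hQ1.2
    · exact (PosDef.posSemidef_add (hQ1.posSemidef.smul (by linarith : (0:ℝ) ≤ 1 - t)) (hQ2.smul h)).2

private lemma aux_affine_deriv (a c : ℝ) (u : ℝ) :
    HasDerivAt (fun s : ℝ => (1 - s) * a + s * c) (c - a) u := by
  have h := ((((hasDerivAt_id u).const_sub 1).mul_const a).add ((hasDerivAt_id u).mul_const c))
  exact h.congr_deriv (by ring)

theorem stmt_8 {n : ℕ} (Q1 Q2 : Matrix (Fin n) (Fin n) ℝ)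
    (hQ1 : Q1.PosDef) (hQ2 : Q2.PosDef) (x1 x2 : Fin n → ℝ)
    (φ : ℝ → (Fin n → ℝ))
    (hφ : ∀ t, φ t = ((1 - t) • Q1 + t • Q2)⁻¹ *ᵥ
      ((1 - t) • (Q1 *ᵥ x1) + t • (Q2 *ᵥ x2))) :
    (∀ t ∈ Set.Icc (0:ℝ) 1, DifferentiableAt ℝ φ t ∧
      t • (((1 - t) • Q1 + t • Q2) *ᵥ deriv φ t) = Q1 *ᵥ (φ t - x1)) ∧
    φ 0 = x1 ∧ φ 1 = x2 := by
  -- notation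
  set b : ℝ → (Fin n → ℝ) := fun s => (1 - s) • (Q1 *ᵥ x1) + s • (Q2 *ᵥ x2) with hb
  -- entry derivative
  have hQd : ∀ (u : ℝ) i j, HasDerivAt (fun s => ((1 - s) • Q1 + s • Q2) i j)
      (Q2 i j - Q1 i j) u := by
    intro u i j
    simp only [Matrix.add_apply, Matrix.smul_apply, smul_eq_mul]
    exact aux_affine_deriv _ _ u
  have hbd : ∀ (u : ℝ) i, HasDerivAt (fun s => b s i)
      ((Q2 *ᵥ x2) i - (Q1 *ᵥ x1) i) u := by
    intro u i
    simp only [hb, Pi.add_apply, Pi.smul_apply, smul_eq_mul]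
    exact aux_affine_deriv _ _ u
  -- determinant differentiability
  have hDdiff : ∀ u : ℝ, DifferentiableAt ℝ (fun s => ((1 - s) • Q1 + s • Q2).det) u :=
    fun u => aux_det_diff _ u (fun i j => (hQd u i j).differentiableAt)
  -- adjugate entries differentiability
  have hadj : ∀ (u : ℝ) i j,
      DifferentiableAt ℝ (fun s => ((1 - s) • Q1 + s • Q2).adjugate i j) u := by
    intro u i j
    simp only [Matrix.adjugate_apply]
    refine aux_det_diff _ u (fun k l => ?_)
    simp only [Matrix.updateRow_apply]
    by_cases hk : k = j
    · simp [hk]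
    · simp only [hk, if_false]
      exact (hQd u k l).differentiableAt
  -- differentiability of φ
  have hφdiff : ∀ u : ℝ, ((1 - u) • Q1 + u • Q2).det ≠ 0 → DifferentiableAt ℝ φ u := by
    intro u hdu
    have hrep : ∀ s, φ s = (((1 - s) • Q1 + s • Q2).det)⁻¹ •
        (((1 - s) • Q1 + s • Q2).adjugate *ᵥ b s) := by
      intro s
      rw [hφ s, Matrix.inv_def, Ring.inverse_eq_inv, Matrix.smul_mulVec]
    have key : DifferentiableAt ℝ (fun s => (((1 - s) • Q1 + s • Q2).det)⁻¹ •
        (((1 - s) • Q1 + s • Q2).adjugate *ᵥ b s)) u := by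
      refine DifferentiableAt.smul ((hDdiff u).inv hdu) ?_
      refine differentiableAt_pi.mpr (fun i => ?_)
      simp only [Matrix.mulVec, dotProduct]
      exact DifferentiableAt.fun_sum fun j _ =>
        (hadj u i j).mul (hbd u j).differentiableAt
    exact key.congr_of_eventuallyEq (Filter.Eventually.of_forall hrep)
  constructor
  · rintro t ⟨ht0, ht1⟩
    have hpd : ((1 - t) • Q1 + t • Q2).PosDef := aux_posdef Q1 Q2 hQ1 hQ2 ht0 ht1
    have hdt : ((1 - t) • Q1 + t • Q2).det ≠ 0 := ne_of_gt hpd.det_pos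
    have hdiff := hφdiff t hdt
    refine ⟨hdiff, ?_⟩
    -- eventually Q s *ᵥ φ s = b s
    have hEv : ∀ᶠ s in nhds t, ((1 - s) • Q1 + s • Q2) *ᵥ φ s = b s := by
      have hne : ∀ᶠ s in nhds t, ((1 - s) • Q1 + s • Q2).det ≠ 0 :=
        (hDdiff t).continuousAt.eventually_ne hdt
      refine hne.mono (fun s hs => ?_)
      rw [hφ s, Matrix.mulVec_mulVec,
        Matrix.mul_nonsing_inv _ (isUnit_iff_ne_zero.mpr hs), Matrix.one_mulVec]
    have hder := hdiff.hasDerivAt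
    -- component derivative equations
    have E2v : Q2 *ᵥ φ t - Q1 *ᵥ φ t + ((1 - t) • Q1 + t • Q2) *ᵥ deriv φ t
        = Q2 *ᵥ x2 - Q1 *ᵥ x1 := by
      funext i
      have hg : HasDerivAt (fun s => ∑ j, ((1 - s) • Q1 + s • Q2) i j * φ s j)
          (∑ j, ((Q2 i j - Q1 i j) * φ t j
            + ((1 - t) • Q1 + t • Q2) i j * deriv φ t j)) t :=
        HasDerivAt.fun_sum fun j _ => (hQd t i j).mul ((hasDerivAt_pi.mp hder) j)
      have hEvi : (fun s => ∑ j, ((1 - s) • Q1 + s • Q2) i j * φ s j)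
          =ᶠ[nhds t] fun s => b s i := by
        refine hEv.mono (fun s hs => ?_)
        have := congrFun hs i
        simpa [Matrix.mulVec, dotProduct] using this
      have hg' : HasDerivAt (fun s => ∑ j, ((1 - s) • Q1 + s • Q2) i j * φ s j)
          ((Q2 *ᵥ x2) i - (Q1 *ᵥ x1) i) t :=
        (hbd t i).congr_of_eventuallyEq hEvi
      have E2i := hg.unique hg'
      simp only [Pi.add_apply, Pi.sub_apply, Matrix.mulVec, dotProduct,
        sub_mul, Finset.sum_add_distrib, Finset.sum_sub_distrib] at E2i ⊢
      linarith [E2i]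
    have E1v : (1 - t) • (Q1 *ᵥ φ t) + t • (Q2 *ᵥ φ t) = b t := by
      have h := hEv.self_of_nhds
      rw [Matrix.add_mulVec, Matrix.smul_mulVec, Matrix.smul_mulVec] at h
      exact h
    rw [Matrix.mulVec_sub]
    funext i
    have e1 := congrFun E1v i
    have e2 := congrFun E2v i
    simp only [hb, Pi.add_apply, Pi.sub_apply, Pi.smul_apply, smul_eq_mul] at e1 e2 ⊢
    linear_combination t * e2 - e1
  constructor
  · rw [hφ 0]
    simp only [sub_zero, one_smul, zero_smul, add_zero]
    rw [Matrix.mulVec_mulVec,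
      Matrix.nonsing_inv_mul _ (isUnit_iff_ne_zero.mpr (ne_of_gt hQ1.det_pos)),
      Matrix.one_mulVec]
  · rw [hφ 1]
    simp only [sub_self, one_smul, zero_smul, zero_add]
    rw [Matrix.mulVec_mulVec,
      Matrix.nonsing_inv_mul _ (isUnit_iff_ne_zero.mpr (ne_of_gt hQ2.det_pos)),
      Matrix.one_mulVec]
end

section
/- Suppose Q1/α = γ Q2/β with γ > 0 (proportional Hessians). Set κ_α = (x2−x1)ᵀQ1(x2−x1)/α and κ_β = (x2−x1)ᵀQ2(x2−x1)/β. Then along the segment φ(t) = (1−t)x1 + t x2, one has f1(φ(t)) = κ_α t² and f2(φ(t)) = κ_β (1−t)², and hence f2(φ(t)) = κ_β (1 − √(f1(φ(t))/κ_α))² for all t ∈ [0,1]. -/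
open Matrix

theorem stmt_11 {n : ℕ} (Q1 Q2 : Matrix (Fin n) (Fin n) ℝ)
    (hQ1 : Q1.PosDef) (hQ2 : Q2.PosDef) (x1 x2 : Fin n → ℝ) (hx : x1 ≠ x2)
    (α β γ : ℝ) (hα : 0 < α) (hβ : 0 < β) (hγ : 0 < γ)
    (hprop : (1 / α) • Q1 = (γ / β) • Q2)
    (f1 f2 : (Fin n → ℝ) → ℝ)
    (hf1 : ∀ x, f1 x = (1 / α) * ((x - x1) ⬝ᵥ (Q1 *ᵥ (x - x1))))
    (hf2 : ∀ x, f2 x = (1 / β) * ((x - x2) ⬝ᵥ (Q2 *ᵥ (x - x2))))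
    (κα κβ : ℝ)
    (hκα : κα = ((x2 - x1) ⬝ᵥ (Q1 *ᵥ (x2 - x1))) / α)
    (hκβ : κβ = ((x2 - x1) ⬝ᵥ (Q2 *ᵥ (x2 - x1))) / β)
    (φ : ℝ → (Fin n → ℝ)) (hφ : ∀ t, φ t = (1 - t) • x1 + t • x2) :
    ∀ t ∈ Set.Icc (0:ℝ) 1,
      f1 (φ t) = κα * t ^ 2 ∧ f2 (φ t) = κβ * (1 - t) ^ 2 ∧
      f2 (φ t) = κβ * (1 - Real.sqrt (f1 (φ t) / κα)) ^ 2 := by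
  intro t ht
  set v := x2 - x1 with hv
  have hvne : v ≠ 0 := sub_ne_zero.mpr (Ne.symm hx)
  have hQv : 0 < v ⬝ᵥ (Q1 *ᵥ v) := by simpa using hQ1.dotProduct_mulVec_pos hvne
  have hκαpos : 0 < κα := by rw [hκα]; positivity
  have h1 : φ t - x1 = t • v := by
    rw [hφ]; ext i; simp [hv]; ring
  have h2 : φ t - x2 = (1 - t) • (-v) := by
    rw [hφ]; ext i; simp [hv]; ring
  have e1 : f1 (φ t) = κα * t ^ 2 := by
    rw [hf1, h1, hκα, smul_dotProduct, mulVec_smul, dotProduct_smul]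
    field_simp; ring
  have e2 : f2 (φ t) = κβ * (1 - t) ^ 2 := by
    rw [hf2, h2, hκβ, smul_dotProduct, mulVec_smul, dotProduct_smul,
      mulVec_neg, neg_dotProduct, dotProduct_neg, neg_neg]
    field_simp; ring
  refine ⟨e1, e2, ?_⟩
  rw [e2, e1]
  congr 2
  rw [mul_comm, mul_div_assoc, div_self hκαpos.ne', mul_one,
    Real.sqrt_sq ht.1]
end

section
/- When the Hessians are proportional and normalized so that κ_α = κ_β = 1, the Pareto front is the graph of u ↦ (1 − √u)² on [0,1], and this function is convex and continuous on [0,1]. -/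
set_option maxHeartbeats 1000000

open Matrix

/-- A point `x` is Pareto optimal (non-dominated) for the bi-objective
minimization problem `(f1, f2)`. -/
def ParetoOptimal {n : ℕ} (f1 f2 : (Fin n → ℝ) → ℝ) (x : Fin n → ℝ) : Prop :=
  ¬ ∃ y : Fin n → ℝ, (f1 y ≤ f1 x ∧ f2 y ≤ f2 x) ∧ (f1 y < f1 x ∨ f2 y < f2 x)

theorem stmt_12 {n : ℕ} (Q1 Q2 : Matrix (Fin n) (Fin n) ℝ)
    (hQ1 : Q1.PosDef) (hQ2 : Q2.PosDef) (x1 x2 : Fin n → ℝ) (hx : x1 ≠ x2)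
    (α β γ : ℝ) (hα : 0 < α) (hβ : 0 < β) (hγ : 0 < γ)
    (hprop : (1 / α) • Q1 = (γ / β) • Q2)
    (hκα : ((x2 - x1) ⬝ᵥ (Q1 *ᵥ (x2 - x1))) / α = 1)
    (hκβ : ((x2 - x1) ⬝ᵥ (Q2 *ᵥ (x2 - x1))) / β = 1)
    (f1 f2 : (Fin n → ℝ) → ℝ)
    (hf1 : ∀ x, f1 x = (1 / α) * ((x - x1) ⬝ᵥ (Q1 *ᵥ (x - x1))))
    (hf2 : ∀ x, f2 x = (1 / β) * ((x - x2) ⬝ᵥ (Q2 *ᵥ (x - x2)))) :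
    (fun x => (f1 x, f2 x)) '' {x | ParetoOptimal f1 f2 x} =
      {p : ℝ × ℝ | p.1 ∈ Set.Icc (0:ℝ) 1 ∧ p.2 = (1 - Real.sqrt p.1) ^ 2} ∧
    ConvexOn ℝ (Set.Icc (0:ℝ) 1) (fun u => (1 - Real.sqrt u) ^ 2) ∧
    ContinuousOn (fun u => (1 - Real.sqrt u) ^ 2) (Set.Icc (0:ℝ) 1) := by
  have hα' : α ≠ 0 := ne_of_gt hα
  have hβ' : β ≠ 0 := ne_of_gt hβ
  set d := x2 - x1 with hdd
  have hdQ1 : d ⬝ᵥ (Q1 *ᵥ d) = α := by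
    field_simp at hκα; linarith
  have hdQ2 : d ⬝ᵥ (Q2 *ᵥ d) = β := by
    field_simp at hκβ; linarith
  have hγ1 : γ = 1 := by
    have hprop' := congrArg (fun M : Matrix (Fin n) (Fin n) ℝ => d ⬝ᵥ (M *ᵥ d)) hprop
    simp only [Matrix.smul_mulVec, dotProduct_smul, smul_eq_mul] at hprop'
    rw [hdQ1, hdQ2] at hprop'
    field_simp at hprop'
    linarith
  rw [hγ1] at hprop
  have hf2' : ∀ x, f2 x = (1 / α) * ((x - x2) ⬝ᵥ (Q1 *ᵥ (x - x2))) := by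
    intro x
    have h := congrArg (fun M : Matrix (Fin n) (Fin n) ℝ =>
      (x - x2) ⬝ᵥ (M *ᵥ (x - x2))) hprop
    simp only [Matrix.smul_mulVec, dotProduct_smul, smul_eq_mul] at h
    rw [hf2 x, ← h]
  -- the square root factorization
  open scoped MatrixOrder in
  set S := CFC.sqrt Q1 with hSdef
  have hsym : Sᵀ = S := by
    open scoped MatrixOrder in
    simpa [Matrix.IsHermitian] using (CFC.sqrt_nonneg Q1).posSemidef.1
  have hQS : ∀ v : Fin n → ℝ, v ⬝ᵥ (Q1 *ᵥ v) = (S *ᵥ v) ⬝ᵥ (S *ᵥ v) := by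
    intro v
    calc v ⬝ᵥ (Q1 *ᵥ v) = v ⬝ᵥ ((S * S) *ᵥ v) := by open scoped MatrixOrder in rw [CFC.sqrt_mul_sqrt_self Q1 hQ1.posSemidef.nonneg]
      _ = v ⬝ᵥ (S *ᵥ (S *ᵥ v)) := by rw [Matrix.mulVec_mulVec]
      _ = (v ᵥ* S) ⬝ᵥ (S *ᵥ v) := by rw [Matrix.dotProduct_mulVec]
      _ = (S *ᵥ v) ⬝ᵥ (S *ᵥ v) := by rw [← Matrix.mulVec_transpose, hsym]
  set s := Real.sqrt α with hsdef
  have hs0 : 0 < s := Real.sqrt_pos.mpr hα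
  set E : (Fin n → ℝ) → EuclideanSpace ℝ (Fin n) :=
    fun v => (EuclideanSpace.equiv (Fin n) ℝ).symm (S *ᵥ v) with hEdef
  have hE2 : ∀ v, ‖E v‖ ^ 2 = v ⬝ᵥ (Q1 *ᵥ v) := by
    intro v
    rw [hEdef]
    simp only
    rw [EuclideanSpace.norm_eq, Real.sq_sqrt (by positivity), hQS]
    simp [dotProduct, sq]
  set g : (Fin n → ℝ) → ℝ := fun v => ‖E v‖ / s with hgdef
  have hg0 : ∀ v, 0 ≤ g v := fun v => div_nonneg (norm_nonneg _) hs0.le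
  have hgsq : ∀ v, g v ^ 2 = (1 / α) * (v ⬝ᵥ (Q1 *ᵥ v)) := by
    intro v
    rw [hgdef]
    simp only
    rw [div_pow, hE2, hsdef, Real.sq_sqrt hα.le]
    ring
  have hgf1 : ∀ x, f1 x = g (x - x1) ^ 2 := fun x => by rw [hf1, hgsq]
  have hgf2 : ∀ x, f2 x = g (x - x2) ^ 2 := fun x => by rw [hf2', hgsq]
  have hgd : g d = 1 := by
    have h2 : g d ^ 2 = 1 := by rw [hgsq, hdQ1]; field_simp
    nlinarith [hg0 d]
  have hgsmul : ∀ t : ℝ, g (t • d) = |t| := by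
    intro t
    have h2 : g (t • d) ^ 2 = t ^ 2 := by
      rw [hgsq, Matrix.mulVec_smul, dotProduct_smul, smul_dotProduct, smul_eq_mul,
        smul_eq_mul, hdQ1]
      field_simp
    nlinarith [hg0 (t • d), abs_nonneg t, sq_abs t, hg0 (t • d)]
  have htri : ∀ x : Fin n → ℝ, 1 ≤ g (x - x1) + g (x - x2) := by
    intro x
    have hEsub : E d = E (x - x1) - E (x - x2) := by
      rw [hEdef]
      simp only
      rw [← map_sub, ← Matrix.mulVec_sub]
      congr 1
      rw [hdd]; abel
    have hn : ‖E d‖ ≤ ‖E (x - x1)‖ + ‖E (x - x2)‖ := by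
      rw [hEsub]; exact norm_sub_le _ _
    have := hgd
    rw [hgdef] at this ⊢
    simp only at this ⊢
    rw [← this, ← add_div]
    exact div_le_div_of_nonneg_right hn hs0.le |>.trans_eq rfl
  refine ⟨?_, ?_, ?_⟩
  · -- image characterization
    ext p
    simp only [Set.mem_image, Set.mem_setOf_eq, Set.mem_Icc]
    constructor
    · rintro ⟨x, hxP, rfl⟩
      set a := g (x - x1) with hadef
      set b := g (x - x2) with hbdef
      have ha0 : 0 ≤ a := hg0 _
      have hb0 : 0 ≤ b := hg0 _
      have hab : 1 ≤ a + b := htri x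
      have ha1 : a ≤ 1 := by
        by_contra h
        push_neg at h
        apply hxP
        refine ⟨x2, ⟨?_, ?_⟩, Or.inl ?_⟩
        · rw [hgf1 x2, hgf1 x, ← hdd, hgd, ← hadef]; nlinarith
        · rw [hgf2 x2, hgf2 x, sub_self, ← hbdef]
          have : g 0 = |(0:ℝ)| := by simpa using hgsmul 0
          rw [this]; simp; positivity
        · rw [hgf1 x2, hgf1 x, ← hdd, hgd, ← hadef]; nlinarith
      have hb1 : b = 1 - a := by
        by_contra h
        have hblt : 1 - a < b := lt_of_le_of_ne (by linarith) (Ne.symm h)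
        apply hxP
        refine ⟨x1 + a • d, ⟨?_, ?_⟩, Or.inr ?_⟩
        · rw [hgf1 (x1 + a • d), hgf1 x, ← hadef]
          have : x1 + a • d - x1 = a • d := by abel
          rw [this, hgsmul, abs_of_nonneg ha0]
        · rw [hgf2 (x1 + a • d), hgf2 x, ← hbdef]
          have hy2 : x1 + a • d - x2 = (a - 1) • d := by
            rw [hdd, sub_smul, one_smul]; abel
          rw [hy2, hgsmul]
          have : |a - 1| = 1 - a := by rw [abs_of_nonpos (by linarith)]; ring
          rw [this]; nlinarith
        · rw [hgf2 (x1 + a • d), hgf2 x, ← hbdef]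
          have hy2 : x1 + a • d - x2 = (a - 1) • d := by
            rw [hdd, sub_smul, one_smul]; abel
          rw [hy2, hgsmul]
          have : |a - 1| = 1 - a := by rw [abs_of_nonpos (by linarith)]; ring
          rw [this]; nlinarith
      refine ⟨⟨?_, ?_⟩, ?_⟩
      · simp only [hgf1 x, ← hadef]; positivity
      · simp only [hgf1 x, ← hadef]; nlinarith
      · simp only [hgf1 x, hgf2 x, ← hadef, ← hbdef]
        rw [Real.sqrt_sq ha0, hb1]
    · rintro ⟨⟨hp0, hp1⟩, hp2⟩
      set t := Real.sqrt p.1 with htdef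
      have ht0 : 0 ≤ t := Real.sqrt_nonneg _
      have ht1 : t ≤ 1 := by rw [htdef, show (1:ℝ) = Real.sqrt 1 by simp]; exact Real.sqrt_le_sqrt hp1
      have ht2 : t ^ 2 = p.1 := Real.sq_sqrt hp0
      set x := x1 + t • d with hxdef
      have hx1 : x - x1 = t • d := by rw [hxdef]; abel
      have hx2 : x - x2 = (t - 1) • d := by rw [hxdef, hdd]; module
      have hf1x : f1 x = t ^ 2 := by
        rw [hgf1, hx1, hgsmul, abs_of_nonneg ht0]
      have hf2x : f2 x = (1 - t) ^ 2 := by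
        rw [hgf2, hx2, hgsmul, abs_of_nonpos (by linarith)]
        ring
      refine ⟨x, ?_, ?_⟩
      · rintro ⟨y, ⟨h1, h2⟩, hstrict⟩
        have hy1 : g (y - x1) ≤ t := by
          have : g (y - x1) ^ 2 ≤ t ^ 2 := by rw [← hgf1, ← hf1x]; exact h1
          nlinarith [hg0 (y - x1)]
        have hy2 : g (y - x2) ≤ 1 - t := by
          have : g (y - x2) ^ 2 ≤ (1 - t) ^ 2 := by rw [← hgf2, ← hf2x]; exact h2
          nlinarith [hg0 (y - x2)]
        have hy3 := htri y
        have he1 : g (y - x1) = t := by linarith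
        have he2 : g (y - x2) = 1 - t := by linarith
        have hf1y : f1 y = f1 x := by rw [hgf1, he1, hf1x]
        have hf2y : f2 y = f2 x := by rw [hgf2, he2, hf2x]
        rcases hstrict with h | h
        · exact absurd hf1y (ne_of_lt h)
        · exact absurd hf2y (ne_of_lt h)
      · have : (f1 x, f2 x) = (p.1, p.2) := by
          rw [hf1x, hf2x, ht2, hp2, htdef]
        simpa using this
  · -- convexity
    have hconv : ConvexOn ℝ (Set.Icc (0:ℝ) 1) (fun u : ℝ => u + 1 - 2 * Real.sqrt u) := by
      have h1 : ConvexOn ℝ (Set.Icc (0:ℝ) 1) (fun u : ℝ => u + 1) :=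
        (convexOn_id (convex_Icc _ _)).add (convexOn_const _ (convex_Icc _ _))
      have h2 : ConcaveOn ℝ (Set.Icc (0:ℝ) 1) (fun u : ℝ => Real.sqrt u) :=
        (Real.strictConcaveOn_sqrt.concaveOn).subset
          (fun u hu => hu.1) (convex_Icc _ _)
      have h3 : ConvexOn ℝ (Set.Icc (0:ℝ) 1) (fun u : ℝ => -(2 * Real.sqrt u)) := by
        have := h2.smul (by norm_num : (0:ℝ) ≤ 2)
        exact this.neg
      have h4 := h1.add h3
      simp only [sub_eq_add_neg]
      exact h4
    have heq : ∀ u ∈ Set.Icc (0:ℝ) 1, (1 - Real.sqrt u) ^ 2 = u + 1 - 2 * Real.sqrt u := by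
      intro u hu
      have : Real.sqrt u ^ 2 = u := Real.sq_sqrt hu.1
      nlinarith [this]
    refine ⟨convex_Icc _ _, ?_⟩
    intro x hx y hy a b ha hb hab
    have hm : a • x + b • y ∈ Set.Icc (0:ℝ) 1 :=
      (convex_Icc (0:ℝ) 1) hx hy ha hb hab
    have h := hconv.2 hx hy ha hb hab
    simp only [smul_eq_mul] at h hm ⊢
    rw [heq _ hm, heq _ hx, heq _ hy]
    linarith
  · -- continuity
    exact ((continuous_const.sub Real.continuous_sqrt).pow 2).continuousOn
end

section
/- In the convex-quadratic problem P, t·(f1∘φ)'(t) = (2/α)⟨[(1−t)Q1 + tQ2]⁻¹ Q1(φ(t)−x1), Q1(φ(t)−x1)⟩ for all t ∈ [0,1], and consequently (f1∘φ)'(t) > 0 for all t ∈ (0,1]. -/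
open Matrix

attribute [local instance] Matrix.linftyOpNormedAddCommGroup Matrix.linftyOpNormedRing
  Matrix.linftyOpNormedAlgebra

namespace Stmt17Aux

variable {n : ℕ}

/-- Entry evaluation as a linear map. -/
def entryLM (i j : Fin n) : Matrix (Fin n) (Fin n) ℝ →ₗ[ℝ] ℝ where
  toFun A := A i j
  map_add' _ _ := rfl
  map_smul' _ _ := rfl

lemma hasDerivAt_entry {g : ℝ → Matrix (Fin n) (Fin n) ℝ} {g' : Matrix (Fin n) (Fin n) ℝ}
    {t : ℝ} (hg : HasDerivAt g g' t) (i j : Fin n) :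
    HasDerivAt (fun s => g s i j) (g' i j) t := by
  have := ((entryLM i j).toContinuousLinearMap.hasFDerivAt (x := g t)).comp_hasDerivAt t hg
  exact this

lemma hasDerivAt_dot {u v : ℝ → Fin n → ℝ} {u' v' : Fin n → ℝ} {t : ℝ}
    (hu : HasDerivAt u u' t) (hv : HasDerivAt v v' t) :
    HasDerivAt (fun s => u s ⬝ᵥ v s) (u' ⬝ᵥ v t + u t ⬝ᵥ v') t := by
  have h : ∀ i ∈ Finset.univ, HasDerivAt (fun s => u s i * v s i)
      (u' i * v t i + u t i * v' i) t :=
    fun i _ => (hasDerivAt_pi.1 hu i).mul (hasDerivAt_pi.1 hv i)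
  have := HasDerivAt.fun_sum h
  simpa [dotProduct, Finset.sum_add_distrib] using this

lemma hasDerivAt_mulVec {g : ℝ → Matrix (Fin n) (Fin n) ℝ} {g' : Matrix (Fin n) (Fin n) ℝ}
    {b : ℝ → Fin n → ℝ} {b' : Fin n → ℝ} {t : ℝ}
    (hg : ∀ i j, HasDerivAt (fun s => g s i j) (g' i j) t)
    (hb : HasDerivAt b b' t) :
    HasDerivAt (fun s => g s *ᵥ b s) (g' *ᵥ b t + g t *ᵥ b') t := by
  refine hasDerivAt_pi.2 fun i => ?_
  have hrow : HasDerivAt (fun s => g s i) (g' i) t := hasDerivAt_pi.2 fun j => hg i j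
  have := hasDerivAt_dot hrow hb
  simpa [Matrix.mulVec, dotProduct] using this

lemma hasDerivAt_ringInverse {M : ℝ → Matrix (Fin n) (Fin n) ℝ} {M' : Matrix (Fin n) (Fin n) ℝ}
    {t : ℝ} (hM : HasDerivAt M M' t) (hu : IsUnit (M t)) (i j : Fin n) :
    HasDerivAt (fun s => Ring.inverse (M s) i j) ((-((M t)⁻¹ * M' * (M t)⁻¹)) i j) t := by
  classical
  have h1 : HasFDerivAt (Ring.inverse : Matrix (Fin n) (Fin n) ℝ → _)
      (-(ContinuousLinearMap.mulLeftRight ℝ _ ↑hu.unit⁻¹ ↑hu.unit⁻¹)) (M t) := by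
    have := hasFDerivAt_ringInverse (𝕜 := ℝ) hu.unit
    rwa [hu.unit_spec] at this
  have h2 := h1.comp_hasDerivAt t hM
  have hc : (↑hu.unit⁻¹ : Matrix (Fin n) (Fin n) ℝ) = (M t)⁻¹ := by
    rw [Matrix.coe_units_inv, hu.unit_spec]
  have h3 : (-(ContinuousLinearMap.mulLeftRight ℝ (Matrix (Fin n) (Fin n) ℝ)
      ↑hu.unit⁻¹ ↑hu.unit⁻¹)) M' = -((M t)⁻¹ * M' * (M t)⁻¹) := by
    simp [ContinuousLinearMap.mulLeftRight_apply, hc]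
  rw [h3] at h2
  exact hasDerivAt_entry h2 i j

lemma posDef_smul {A : Matrix (Fin n) (Fin n) ℝ} (hA : A.PosDef) {c : ℝ} (hc : 0 < c) :
    (c • A).PosDef := by
  refine Matrix.PosDef.of_dotProduct_mulVec_pos ?_ fun x hx => ?_
  · show (c • A)ᴴ = c • A
    rw [Matrix.conjTranspose_smul, hA.1]
    simp
  · rw [Matrix.smul_mulVec, dotProduct_smul, smul_eq_mul]
    exact mul_pos hc (hA.dotProduct_mulVec_pos hx)

lemma posSemidef_smul {A : Matrix (Fin n) (Fin n) ℝ} (hA : A.PosDef) {c : ℝ} (hc : 0 ≤ c) :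
    (c • A).PosSemidef := by
  refine Matrix.PosSemidef.of_dotProduct_mulVec_nonneg ?_ fun x => ?_
  · show (c • A)ᴴ = c • A
    rw [Matrix.conjTranspose_smul, hA.1]
    simp
  · rw [Matrix.smul_mulVec, dotProduct_smul, smul_eq_mul]
    rcases eq_or_ne x 0 with rfl | hx
    · simp
    · exact mul_nonneg hc (hA.dotProduct_mulVec_pos hx).le

end Stmt17Aux

open Stmt17Aux

theorem stmt_17 {n : ℕ} (Q1 Q2 : Matrix (Fin n) (Fin n) ℝ)
    (hQ1 : Q1.PosDef) (hQ2 : Q2.PosDef) (x1 x2 : Fin n → ℝ) (hx : x1 ≠ x2)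
    (α : ℝ) (hα : 0 < α)
    (f1 : (Fin n → ℝ) → ℝ)
    (hf1 : ∀ x, f1 x = (1 / α) * ((x - x1) ⬝ᵥ (Q1 *ᵥ (x - x1))))
    (φ : ℝ → (Fin n → ℝ))
    (hφ : ∀ t, φ t = ((1 - t) • Q1 + t • Q2)⁻¹ *ᵥ
      ((1 - t) • (Q1 *ᵥ x1) + t • (Q2 *ᵥ x2))) :
    (∀ t ∈ Set.Icc (0:ℝ) 1,
      t * deriv (f1 ∘ φ) t =
        (2 / α) * ((((1 - t) • Q1 + t • Q2)⁻¹ *ᵥ (Q1 *ᵥ (φ t - x1))) ⬝ᵥ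
          (Q1 *ᵥ (φ t - x1)))) ∧
    (∀ t ∈ Set.Ioc (0:ℝ) 1, 0 < deriv (f1 ∘ φ) t) := by
  classical
  have hQ1T : Q1ᵀ = Q1 := by
    have := hQ1.1
    rwa [Matrix.IsHermitian, Matrix.conjTranspose_eq_transpose_of_trivial] at this
  have hArw : ∀ t : ℝ, (1 - t) • Q1 + t • Q2 = Q1 + t • (Q2 - Q1) := by
    intro t; rw [sub_smul, one_smul, smul_sub]; abel
  have hbrw : ∀ t : ℝ, (1 - t) • (Q1 *ᵥ x1) + t • (Q2 *ᵥ x2)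
      = Q1 *ᵥ x1 + t • (Q2 *ᵥ x2 - Q1 *ᵥ x1) := by
    intro t; rw [sub_smul, one_smul, smul_sub]; abel
  have hApos : ∀ t ∈ Set.Icc (0:ℝ) 1, ((1 - t) • Q1 + t • Q2).PosDef := by
    intro t ht
    rcases eq_or_lt_of_le ht.1 with h0 | h0
    · have : (1 - t) • Q1 + t • Q2 = Q1 := by rw [← h0]; simp
      rw [this]; exact hQ1
    · exact Matrix.PosDef.posSemidef_add (posSemidef_smul hQ1 (by linarith [ht.2]))
        (posDef_smul hQ2 h0)
  have hAdet : ∀ t ∈ Set.Icc (0:ℝ) 1, IsUnit ((1 - t) • Q1 + t • Q2).det :=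
    fun t ht => (Matrix.isUnit_iff_isUnit_det _).1 (hApos t ht).isUnit
  have hAφ : ∀ t ∈ Set.Icc (0:ℝ) 1,
      ((1 - t) • Q1 + t • Q2) *ᵥ φ t = (1 - t) • (Q1 *ᵥ x1) + t • (Q2 *ᵥ x2) := by
    intro t ht
    rw [hφ, Matrix.mulVec_mulVec, Matrix.mul_nonsing_inv _ (hAdet t ht), Matrix.one_mulVec]
  have hkey : ∀ t ∈ Set.Icc (0:ℝ) 1,
      Q1 *ᵥ (φ t - x1) = t • ((Q2 *ᵥ x2 - Q1 *ᵥ x1) - (Q2 - Q1) *ᵥ φ t) := by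
    intro t ht
    have h := hAφ t ht
    rw [hArw, hbrw, Matrix.add_mulVec, Matrix.smul_mulVec] at h
    calc Q1 *ᵥ (φ t - x1)
        = (Q1 *ᵥ φ t + t • ((Q2 - Q1) *ᵥ φ t)) - Q1 *ᵥ x1 - t • ((Q2 - Q1) *ᵥ φ t) := by
          rw [Matrix.mulVec_sub]; module
      _ = (Q1 *ᵥ x1 + t • (Q2 *ᵥ x2 - Q1 *ᵥ x1)) - Q1 *ᵥ x1 - t • ((Q2 - Q1) *ᵥ φ t) := by
          rw [h]
      _ = t • ((Q2 *ᵥ x2 - Q1 *ᵥ x1) - (Q2 - Q1) *ᵥ φ t) := by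
          module
  have hDeriv : ∀ t ∈ Set.Icc (0:ℝ) 1, HasDerivAt (f1 ∘ φ)
      ((2 / α) * ((((1 - t) • Q1 + t • Q2)⁻¹ *ᵥ
        ((Q2 *ᵥ x2 - Q1 *ᵥ x1) - (Q2 - Q1) *ᵥ φ t)) ⬝ᵥ (Q1 *ᵥ (φ t - x1)))) t := by
    intro t ht
    have hM : HasDerivAt (fun s : ℝ => (1 - s) • Q1 + s • Q2) (Q2 - Q1) t := by
      have h1 : HasDerivAt (fun s : ℝ => (1 - s)) (-1 : ℝ) t := by
        simpa using (hasDerivAt_id t).const_sub 1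
      have h2 := (h1.smul_const Q1).add ((hasDerivAt_id t).smul_const Q2)
      refine h2.congr_deriv ?_
      rw [neg_one_smul, one_smul]; abel
    have hb : HasDerivAt (fun s : ℝ => (1 - s) • (Q1 *ᵥ x1) + s • (Q2 *ᵥ x2))
        (Q2 *ᵥ x2 - Q1 *ᵥ x1) t := by
      have h1 : HasDerivAt (fun s : ℝ => (1 - s)) (-1 : ℝ) t := by
        simpa using (hasDerivAt_id t).const_sub 1
      have h2 := (h1.smul_const (Q1 *ᵥ x1)).add ((hasDerivAt_id t).smul_const (Q2 *ᵥ x2))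
      refine h2.congr_deriv ?_
      rw [neg_one_smul, one_smul]; abel
    have hu : IsUnit ((1 - t) • Q1 + t • Q2) := (hApos t ht).isUnit
    have hinv := fun i j => hasDerivAt_ringInverse hM hu i j
    have hψ := hasDerivAt_mulVec hinv hb
    have hφfun : φ = fun s => Ring.inverse ((1 - s) • Q1 + s • Q2) *ᵥ
        ((1 - s) • (Q1 *ᵥ x1) + s • (Q2 *ᵥ x2)) := by
      funext s; rw [hφ, Matrix.nonsing_inv_eq_ringInverse]
    rw [← hφfun] at hψ
    have hψ' : HasDerivAt φ (((1 - t) • Q1 + t • Q2)⁻¹ *ᵥ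
        ((Q2 *ᵥ x2 - Q1 *ᵥ x1) - (Q2 - Q1) *ᵥ φ t)) t := by
      convert hψ using 1
      rw [← Matrix.nonsing_inv_eq_ringInverse, Matrix.mulVec_sub, Matrix.neg_mulVec]
      have hbt : ((1 - t) • Q1 + t • Q2)⁻¹ *ᵥ ((1 - t) • (Q1 *ᵥ x1) + t • (Q2 *ᵥ x2))
          = φ t := (hφ t).symm
      rw [← Matrix.mulVec_mulVec, ← Matrix.mulVec_mulVec, hbt]
      abel
    have hUv : HasDerivAt (fun s => φ s - x1) (((1 - t) • Q1 + t • Q2)⁻¹ *ᵥ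
        ((Q2 *ᵥ x2 - Q1 *ᵥ x1) - (Q2 - Q1) *ᵥ φ t)) t := hψ'.sub_const x1
    have hconst : ∀ i j, HasDerivAt (fun _ : ℝ => Q1 i j)
        ((0 : Matrix (Fin n) (Fin n) ℝ) i j) t := fun i j => by
      simpa using hasDerivAt_const t (Q1 i j)
    have hV : HasDerivAt (fun s => Q1 *ᵥ (φ s - x1)) (Q1 *ᵥ
        (((1 - t) • Q1 + t • Q2)⁻¹ *ᵥ ((Q2 *ᵥ x2 - Q1 *ᵥ x1) - (Q2 - Q1) *ᵥ φ t))) t := by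
      have := hasDerivAt_mulVec hconst hUv
      simpa [Matrix.zero_mulVec] using this
    have hdot := (hasDerivAt_dot hUv hV).const_mul (1 / α)
    have hcomp : f1 ∘ φ = fun s => (1 / α) * ((φ s - x1) ⬝ᵥ (Q1 *ᵥ (φ s - x1))) :=
      funext fun s => hf1 (φ s)
    rw [← hcomp] at hdot
    refine hdot.congr_deriv ?_
    have hsym : ∀ w y : Fin n → ℝ, w ⬝ᵥ (Q1 *ᵥ y) = y ⬝ᵥ (Q1 *ᵥ w) := by
      intro w y
      rw [Matrix.dotProduct_mulVec]
      nth_rewrite 1 [← hQ1T]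
      rw [Matrix.vecMul_transpose, dotProduct_comm]
    rw [hsym (φ t - x1)]
    ring
  constructor
  · intro t ht
    rw [(hDeriv t ht).deriv]
    have hts : t • (((1 - t) • Q1 + t • Q2)⁻¹ *ᵥ
        ((Q2 *ᵥ x2 - Q1 *ᵥ x1) - (Q2 - Q1) *ᵥ φ t))
        = ((1 - t) • Q1 + t • Q2)⁻¹ *ᵥ (Q1 *ᵥ (φ t - x1)) := by
      rw [← Matrix.mulVec_smul, ← hkey t ht]
    rw [← hts, smul_dotProduct, smul_eq_mul]
    ring
  · intro t ht
    have ht' : t ∈ Set.Icc (0:ℝ) 1 := ⟨ht.1.le, ht.2⟩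
    rw [(hDeriv t ht').deriv]
    have hvne : Q1 *ᵥ (φ t - x1) ≠ 0 := by
      intro h0
      have hφx : φ t - x1 = 0 := by
        have := congrArg (fun w => Q1⁻¹ *ᵥ w) h0
        simpa [Matrix.mulVec_mulVec,
          Matrix.nonsing_inv_mul _ ((Matrix.isUnit_iff_isUnit_det _).1 hQ1.isUnit),
          Matrix.one_mulVec] using this
      have hφt : φ t = x1 := by rwa [sub_eq_zero] at hφx
      have hk := hkey t ht'
      rw [h0, hφt] at hk
      have hQ2v : Q2 *ᵥ (x2 - x1) = 0 := by
        have hinner : (Q2 *ᵥ x2 - Q1 *ᵥ x1) - (Q2 - Q1) *ᵥ x1 = Q2 *ᵥ (x2 - x1) := by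
          rw [Matrix.sub_mulVec, Matrix.mulVec_sub]; abel
        rw [hinner] at hk
        have := hk.symm
        rcases smul_eq_zero.1 this with h | h
        · exact absurd h (ne_of_gt ht.1)
        · exact h
      apply hx
      have : x2 - x1 = 0 := by
        have := congrArg (fun w => Q2⁻¹ *ᵥ w) hQ2v
        simpa [Matrix.mulVec_mulVec,
          Matrix.nonsing_inv_mul _ ((Matrix.isUnit_iff_isUnit_det _).1 hQ2.isUnit),
          Matrix.one_mulVec] using this
      have h21 : x2 = x1 := by rwa [sub_eq_zero] at this
      exact h21.symm
    have hposA : (((1 - t) • Q1 + t • Q2)⁻¹).PosDef := (hApos t ht').inv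
    have hq : 0 < (((1 - t) • Q1 + t • Q2)⁻¹ *ᵥ (Q1 *ᵥ (φ t - x1))) ⬝ᵥ
        (Q1 *ᵥ (φ t - x1)) := by
      have := hposA.dotProduct_mulVec_pos hvne
      rw [dotProduct_comm]
      simpa using this
    have hts : t • (((1 - t) • Q1 + t • Q2)⁻¹ *ᵥ
        ((Q2 *ᵥ x2 - Q1 *ᵥ x1) - (Q2 - Q1) *ᵥ φ t))
        = ((1 - t) • Q1 + t • Q2)⁻¹ *ᵥ (Q1 *ᵥ (φ t - x1)) := by
      rw [← Matrix.mulVec_smul, ← hkey t ht']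
    have h2 : t * ((((1 - t) • Q1 + t • Q2)⁻¹ *ᵥ
        ((Q2 *ᵥ x2 - Q1 *ᵥ x1) - (Q2 - Q1) *ᵥ φ t)) ⬝ᵥ (Q1 *ᵥ (φ t - x1)))
        = (((1 - t) • Q1 + t • Q2)⁻¹ *ᵥ (Q1 *ᵥ (φ t - x1))) ⬝ᵥ (Q1 *ᵥ (φ t - x1)) := by
      rw [← hts, smul_dotProduct, smul_eq_mul]
    have hs : 0 < (((1 - t) • Q1 + t • Q2)⁻¹ *ᵥ
        ((Q2 *ᵥ x2 - Q1 *ᵥ x1) - (Q2 - Q1) *ᵥ φ t)) ⬝ᵥ (Q1 *ᵥ (φ t - x1)) := by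
      by_contra hcon
      push_neg at hcon
      have : t * ((((1 - t) • Q1 + t • Q2)⁻¹ *ᵥ
          ((Q2 *ᵥ x2 - Q1 *ᵥ x1) - (Q2 - Q1) *ᵥ φ t)) ⬝ᵥ (Q1 *ᵥ (φ t - x1))) ≤ 0 :=
        mul_nonpos_of_nonneg_of_nonpos ht.1.le hcon
      rw [h2] at this
      linarith
    exact mul_pos (by positivity) hs
end

section
/- In the convex-quadratic problem P with x1 ≠ x2, lim_{t→0} (f1∘φ)'(t)/t = (2/α)⟨Q1⁻¹Q2(x2−x1), Q2(x2−x1)⟩ > 0, and lim_{t→1} (f2∘φ)'(t)/(1−t) = −(2/β)⟨Q2⁻¹Q1(x1−x2), Q1(x1−x2)⟩ < 0. -/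
set_option maxHeartbeats 1000000

open Matrix Filter

lemma contDiff_det_family {m : ℕ} {M : ℝ → Matrix (Fin m) (Fin m) ℝ}
    (h : ∀ i j, ContDiff ℝ ⊤ fun t => M t i j) :
    ContDiff ℝ ⊤ fun t => (M t).det := by
  simp_rw [Matrix.det_apply, Units.smul_def, zsmul_eq_mul]
  exact ContDiff.sum fun σ _ =>
    contDiff_const.mul (contDiff_prod fun i _ => h (σ i) i)

lemma contDiff_adjugate_family {m : ℕ} {M : ℝ → Matrix (Fin m) (Fin m) ℝ}
    (h : ∀ i j, ContDiff ℝ ⊤ fun t => M t i j) (i j : Fin m) :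
    ContDiff ℝ ⊤ fun t => (M t).adjugate i j := by
  simp_rw [Matrix.adjugate_apply]
  apply contDiff_det_family
  intro k l
  simp_rw [Matrix.updateRow_apply]
  split_ifs
  · exact contDiff_const
  · exact h k l

lemma main_lemma {n : ℕ} (Q1 Q2 : Matrix (Fin n) (Fin n) ℝ)
    (hQ1 : Q1.PosDef) (x1 x2 : Fin n → ℝ) (α : ℝ) (hα : 0 < α) :
    Tendsto (fun t => deriv (fun s =>
        (1 / α) * (((((1 - s) • Q1 + s • Q2)⁻¹ *ᵥ
            ((1 - s) • (Q1 *ᵥ x1) + s • (Q2 *ᵥ x2))) - x1) ⬝ᵥ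
          (Q1 *ᵥ ((((1 - s) • Q1 + s • Q2)⁻¹ *ᵥ
            ((1 - s) • (Q1 *ᵥ x1) + s • (Q2 *ᵥ x2))) - x1)))) t / t)
      (nhdsWithin 0 (Set.Ioi 0))
      (nhds ((2 / α) * ((Q1⁻¹ *ᵥ (Q2 *ᵥ (x2 - x1))) ⬝ᵥ (Q2 *ᵥ (x2 - x1))))) := by
  set v : Fin n → ℝ := Q2 *ᵥ (x2 - x1) with hv
  set A : ℝ → Matrix (Fin n) (Fin n) ℝ := fun t => (1 - t) • Q1 + t • Q2 with hA
  have hAcd : ∀ i j, ContDiff ℝ ⊤ fun t => A t i j := by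
    intro i j
    simp only [hA, Matrix.add_apply, Matrix.smul_apply, smul_eq_mul]
    exact ((contDiff_const.sub contDiff_id).mul contDiff_const).add
      (contDiff_id.mul contDiff_const)
  set d : ℝ → ℝ := fun t => (A t).det with hd
  have hdcd : ContDiff ℝ ⊤ d := contDiff_det_family hAcd
  set w : ℝ → (Fin n → ℝ) := fun t => (A t).adjugate *ᵥ v with hw
  have hwcd : ∀ i, ContDiff ℝ ⊤ fun t => w t i := by
    intro i
    simp only [hw, Matrix.mulVec, dotProduct]
    exact ContDiff.sum fun j _ => (contDiff_adjugate_family hAcd i j).mul contDiff_const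
  set p : ℝ → ℝ := fun t => w t ⬝ᵥ (Q1 *ᵥ w t) with hp
  have hpcd : ContDiff ℝ ⊤ p := by
    simp only [hp, dotProduct, Matrix.mulVec]
    exact ContDiff.sum fun i _ => (hwcd i).mul
      (ContDiff.sum fun j _ => contDiff_const.mul (hwcd j))
  set q : ℝ → ℝ := fun t => d t ^ 2 with hq
  have hqcd : ContDiff ℝ ⊤ q := hdcd.pow 2
  set g : ℝ → ℝ := fun t => p t / q t with hg
  set G : ℝ → ℝ := fun t => (deriv p t * q t - p t * deriv q t) / q t ^ 2 with hG
  have hA0 : A 0 = Q1 := by simp [hA]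
  have hd0 : d 0 ≠ 0 := by
    simp only [hd, hA0]; exact ne_of_gt hQ1.det_pos
  have hinv : ∀ t, (A t)⁻¹ *ᵥ v = (d t)⁻¹ • w t := by
    intro t
    rw [Matrix.inv_def, Ring.inverse_eq_inv', Matrix.smul_mulVec]
  -- the open set where things are nice
  set U : Set ℝ := {t | d t ≠ 0} with hU
  have hUopen : IsOpen U := isOpen_ne_fun (hdcd.continuous) continuous_const
  have hU0 : (0 : ℝ) ∈ U := hd0
  -- value identity on U
  have hval : ∀ t ∈ U, (1 / α) * ((((A t)⁻¹ *ᵥ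
      ((1 - t) • (Q1 *ᵥ x1) + t • (Q2 *ᵥ x2))) - x1) ⬝ᵥ
        (Q1 *ᵥ (((A t)⁻¹ *ᵥ ((1 - t) • (Q1 *ᵥ x1) + t • (Q2 *ᵥ x2))) - x1)))
      = (1 / α) * (t ^ 2 * g t) := by
    intro t ht
    have hunit : IsUnit (A t).det := isUnit_iff_ne_zero.2 ht
    have hkey : (A t)⁻¹ *ᵥ ((1 - t) • (Q1 *ᵥ x1) + t • (Q2 *ᵥ x2)) - x1
        = (t * (d t)⁻¹) • w t := by
      have hb : (1 - t) • (Q1 *ᵥ x1) + t • (Q2 *ᵥ x2)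
          = A t *ᵥ x1 + t • v := by
        simp [hA, hv, Matrix.add_mulVec, Matrix.smul_mulVec,
          Matrix.mulVec_sub, smul_sub]
      rw [hb, Matrix.mulVec_add, Matrix.mulVec_smul, Matrix.mulVec_mulVec,
        Matrix.nonsing_inv_mul _ hunit, Matrix.one_mulVec, hinv t, smul_smul]
      abel
    rw [hkey, Matrix.mulVec_smul, smul_dotProduct, dotProduct_smul,
      smul_eq_mul, smul_eq_mul]
    have : g t = p t / q t := rfl
    rw [this, hq]
    field_simp
    ring
  -- derivative identity on U
  have hderiv : ∀ t ∈ U, deriv (fun s =>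
      (1 / α) * ((((A s)⁻¹ *ᵥ ((1 - s) • (Q1 *ᵥ x1) + s • (Q2 *ᵥ x2))) - x1) ⬝ᵥ
        (Q1 *ᵥ (((A s)⁻¹ *ᵥ ((1 - s) • (Q1 *ᵥ x1) + s • (Q2 *ᵥ x2))) - x1)))) t
      = (1 / α) * (2 * t ^ 1 * g t + t ^ 2 * G t) := by
    intro t ht
    have heq : (fun s => (1 / α) * ((((A s)⁻¹ *ᵥ
        ((1 - s) • (Q1 *ᵥ x1) + s • (Q2 *ᵥ x2))) - x1) ⬝ᵥ
          (Q1 *ᵥ (((A s)⁻¹ *ᵥ ((1 - s) • (Q1 *ᵥ x1) + s • (Q2 *ᵥ x2))) - x1))))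
        =ᶠ[nhds t] (fun s => (1 / α) * (s ^ 2 * g s)) := by
      filter_upwards [hUopen.mem_nhds ht] with s hs using hval s hs
    rw [heq.deriv_eq]
    have hqne : q t ≠ 0 := pow_ne_zero 2 ht
    have hgd : HasDerivAt g (G t) t :=
      HasDerivAt.div ((hpcd.differentiable (by simp) t).hasDerivAt)
        ((hqcd.differentiable (by simp) t).hasDerivAt) hqne
    exact (((hasDerivAt_pow 2 t).mul hgd).const_mul (1 / α)).deriv
  -- limit
  have hcontG : ContinuousAt G 0 := by
    have h1 : Continuous (deriv p) := hpcd.continuous_deriv le_top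
    have h2 : Continuous (deriv q) := hqcd.continuous_deriv le_top
    have hqne : q 0 ^ 2 ≠ 0 := pow_ne_zero 2 (pow_ne_zero 2 hd0)
    exact (((h1.continuousAt.mul (hqcd.continuous.continuousAt)).sub
      ((hpcd.continuous.continuousAt).mul h2.continuousAt)).div
      ((hqcd.continuous.pow 2).continuousAt) hqne)
  have hcontg : ContinuousAt g 0 :=
    (hpcd.continuous.continuousAt).div (hqcd.continuous.continuousAt)
      (pow_ne_zero 2 hd0)
  have hlim : Tendsto (fun t => (1 / α) * (2 * g t + t * G t))
      (nhdsWithin 0 (Set.Ioi 0)) (nhds ((1 / α) * (2 * g 0 + 0 * G 0))) := by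
    apply Tendsto.mono_left _ nhdsWithin_le_nhds
    exact (tendsto_const_nhds.mul ((tendsto_const_nhds.mul hcontg).add
      (tendsto_id.mul hcontG)))
  have hg0 : (1 / α) * (2 * g 0 + 0 * G 0)
      = (2 / α) * ((Q1⁻¹ *ᵥ v) ⬝ᵥ v) := by
    have hu0 : Q1⁻¹ *ᵥ v = (d 0)⁻¹ • w 0 := by rw [← hA0]; exact hinv 0
    have hQ1v : Q1 *ᵥ (Q1⁻¹ *ᵥ v) = v := by
      rw [Matrix.mulVec_mulVec, Matrix.mul_nonsing_inv _
        (isUnit_iff_ne_zero.2 (ne_of_gt hQ1.det_pos)), Matrix.one_mulVec]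
    have h2 : Q1 *ᵥ ((d 0)⁻¹ • w 0) = v := by rw [← hu0]; exact hQ1v
    have h3 : (Q1⁻¹ *ᵥ v) ⬝ᵥ v
        = ((d 0)⁻¹ • w 0) ⬝ᵥ (Q1 *ᵥ ((d 0)⁻¹ • w 0)) := by rw [hu0, h2]
    rw [h3, Matrix.mulVec_smul, smul_dotProduct, dotProduct_smul,
      smul_eq_mul, smul_eq_mul]
    have h4 : g 0 = p 0 / q 0 := rfl
    have h5 : p 0 = w 0 ⬝ᵥ Q1 *ᵥ w 0 := rfl
    have h6 : q 0 = d 0 ^ 2 := rfl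
    rw [h4, h5, h6]
    ring
  rw [← hg0]
  apply hlim.congr'
  have hUmem : U ∈ nhdsWithin (0:ℝ) (Set.Ioi 0) :=
    nhdsWithin_le_nhds (hUopen.mem_nhds hU0)
  filter_upwards [hUmem, self_mem_nhdsWithin] with t htU htpos
  rw [hderiv t htU]
  have htne : (t : ℝ) ≠ 0 := ne_of_gt htpos
  rw [eq_div_iff htne]
  ring

lemma dot_pos {n : ℕ} (Q R : Matrix (Fin n) (Fin n) ℝ) (hQ : Q.PosDef) (hR : R.PosDef)
    (y : Fin n → ℝ) (hy : y ≠ 0) :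
    0 < (Q⁻¹ *ᵥ (R *ᵥ y)) ⬝ᵥ (R *ᵥ y) := by
  have hRy : R *ᵥ y ≠ 0 := by
    intro h
    apply hy
    have h2 : R⁻¹ *ᵥ (R *ᵥ y) = y := by
      rw [Matrix.mulVec_mulVec, Matrix.nonsing_inv_mul _
        (isUnit_iff_ne_zero.2 (ne_of_gt hR.det_pos)), Matrix.one_mulVec]
    rw [← h2, h, Matrix.mulVec_zero]
  have := hQ.inv.re_dotProduct_pos hRy
  simpa [dotProduct_comm] using this

theorem stmt_18 {n : ℕ} (Q1 Q2 : Matrix (Fin n) (Fin n) ℝ)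
    (hQ1 : Q1.PosDef) (hQ2 : Q2.PosDef) (x1 x2 : Fin n → ℝ) (hx : x1 ≠ x2)
    (α β : ℝ) (hα : 0 < α) (hβ : 0 < β)
    (f1 f2 : (Fin n → ℝ) → ℝ)
    (hf1 : ∀ x, f1 x = (1 / α) * ((x - x1) ⬝ᵥ (Q1 *ᵥ (x - x1))))
    (hf2 : ∀ x, f2 x = (1 / β) * ((x - x2) ⬝ᵥ (Q2 *ᵥ (x - x2))))
    (φ : ℝ → (Fin n → ℝ))
    (hφ : ∀ t, φ t = ((1 - t) • Q1 + t • Q2)⁻¹ *ᵥ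
      ((1 - t) • (Q1 *ᵥ x1) + t • (Q2 *ᵥ x2))) :
    (Tendsto (fun t => deriv (f1 ∘ φ) t / t) (nhdsWithin 0 (Set.Ioi 0))
      (nhds ((2 / α) * ((Q1⁻¹ *ᵥ (Q2 *ᵥ (x2 - x1))) ⬝ᵥ (Q2 *ᵥ (x2 - x1))))) ∧
      0 < (2 / α) * ((Q1⁻¹ *ᵥ (Q2 *ᵥ (x2 - x1))) ⬝ᵥ (Q2 *ᵥ (x2 - x1)))) ∧
    (Tendsto (fun t => deriv (f2 ∘ φ) t / (1 - t)) (nhdsWithin 1 (Set.Iio 1))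
      (nhds (-(2 / β) * ((Q2⁻¹ *ᵥ (Q1 *ᵥ (x1 - x2))) ⬝ᵥ (Q1 *ᵥ (x1 - x2))))) ∧
      -(2 / β) * ((Q2⁻¹ *ᵥ (Q1 *ᵥ (x1 - x2))) ⬝ᵥ (Q1 *ᵥ (x1 - x2))) < 0) := by
  have hx21 : x2 - x1 ≠ 0 := sub_ne_zero.mpr (Ne.symm hx)
  have hx12 : x1 - x2 ≠ 0 := sub_ne_zero.mpr hx
  have hpos1 : 0 < (2 / α) * ((Q1⁻¹ *ᵥ (Q2 *ᵥ (x2 - x1))) ⬝ᵥ (Q2 *ᵥ (x2 - x1))) :=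
    mul_pos (div_pos two_pos hα) (dot_pos Q1 Q2 hQ1 hQ2 _ hx21)
  have hpos2 : 0 < (2 / β) * ((Q2⁻¹ *ᵥ (Q1 *ᵥ (x1 - x2))) ⬝ᵥ (Q1 *ᵥ (x1 - x2))) :=
    mul_pos (div_pos two_pos hβ) (dot_pos Q2 Q1 hQ2 hQ1 _ hx12)
  refine ⟨⟨?_, hpos1⟩, ⟨?_, by linarith⟩⟩
  · have hcomp : f1 ∘ φ = fun s =>
        (1 / α) * (((((1 - s) • Q1 + s • Q2)⁻¹ *ᵥ
            ((1 - s) • (Q1 *ᵥ x1) + s • (Q2 *ᵥ x2))) - x1) ⬝ᵥ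
          (Q1 *ᵥ ((((1 - s) • Q1 + s • Q2)⁻¹ *ᵥ
            ((1 - s) • (Q1 *ᵥ x1) + s • (Q2 *ᵥ x2))) - x1))) := by
      funext s
      simp [Function.comp, hf1, hφ]
    rw [hcomp]
    exact main_lemma Q1 Q2 hQ1 x1 x2 α hα
  · -- second limit via reflection t ↦ 1 - t
    set F2 : ℝ → ℝ := fun s =>
        (1 / β) * (((((1 - s) • Q2 + s • Q1)⁻¹ *ᵥ
            ((1 - s) • (Q2 *ᵥ x2) + s • (Q1 *ᵥ x1))) - x2) ⬝ᵥ
          (Q2 *ᵥ ((((1 - s) • Q2 + s • Q1)⁻¹ *ᵥ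
            ((1 - s) • (Q2 *ᵥ x2) + s • (Q1 *ᵥ x1))) - x2))) with hF2
    have hmain : Tendsto (fun s => deriv F2 s / s) (nhdsWithin 0 (Set.Ioi 0))
        (nhds ((2 / β) * ((Q2⁻¹ *ᵥ (Q1 *ᵥ (x1 - x2))) ⬝ᵥ (Q1 *ᵥ (x1 - x2))))) :=
      main_lemma Q2 Q1 hQ2 x2 x1 β hβ
    have hrefl : Tendsto (fun t : ℝ => 1 - t) (nhdsWithin 1 (Set.Iio 1))
        (nhdsWithin 0 (Set.Ioi 0)) := by
      apply tendsto_nhdsWithin_of_tendsto_nhds_of_eventually_within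
      · have : Tendsto (fun t : ℝ => 1 - t) (nhds 1) (nhds (1 - 1)) :=
          (continuous_const.sub continuous_id).tendsto 1
        simpa using this.mono_left nhdsWithin_le_nhds
      · filter_upwards [self_mem_nhdsWithin] with t ht
        simpa [Set.mem_Ioi, sub_pos] using ht
    have hcompphi : f2 ∘ φ = fun t => F2 (1 - t) := by
      funext t
      simp only [Function.comp, hF2, hf2, hφ, sub_sub_cancel]
      rw [add_comm (t • Q2) ((1 - t) • Q1), add_comm (t • (Q2 *ᵥ x2)) ((1 - t) • (Q1 *ᵥ x1))]
    have hderiv2 : ∀ t : ℝ, deriv (f2 ∘ φ) t = -deriv F2 (1 - t) := by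
      intro t
      rw [hcompphi]
      exact deriv_comp_const_sub F2 1 t
    rw [neg_mul]
    have := (hmain.comp hrefl).neg
    simp only [Function.comp] at this
    apply this.congr'
    filter_upwards with t
    rw [hderiv2 t, neg_div]
end
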